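/- Let M ≥ 1, let R = ℂ[ψ₁,…,ψ_M], and let Ω = R ⊕ Rc̃ be the free R-module with basis {1, c̃} where c̃ is an odd square-zero generator; define d : Ω → Ω by d(ω₀ + c̃ω₁) = (Σ_{i=1}^{M} ψᵢ²)ω₁. Then d∘d = 0, and: (i) an element ω ∈ Ω satisfies dω = 0 if and only if ω = dρ + a₀ + ψ₁a₁ for some ρ ∈ Ω and some polynomials a₀, a₁ ∈ ℂ[ψ₂,…,ψ_M] (complex constants when M = 1); and (ii) if a₀ + ψ₁a₁ = dρ for some ρ ∈ Ω and a₀, a₁ ∈ ℂ[ψ₂,…,ψ_M], then a₀ = a₁ = 0. -/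

import Mathlib

/-!
The one-dimensional building block of the D = 2 supersymmetry algebra cohomology:
`Ω = R ⊕ Rc̃` with `dc̃ = Σᵢψᵢ²`, `R = ℂ[ψ₁,…,ψ_M]`.
-/

open MvPolynomial

noncomputable section

/-- The polynomial ring `ℂ[ψ₁,…,ψ_M]`. -/
abbrev R1 (M : ℕ) : Type := MvPolynomial (Fin M) ℂ

/-- `Ω = R ⊕ Rc̃`: free `R1`-module with basis `{1, c̃}` (components 0, 1). -/
abbrev Om1 (M : ℕ) : Type := Fin 2 → R1 M

/-- The differential `d(ω₀ + c̃ω₁) = (Σᵢψᵢ²)ω₁`. -/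
def d1 {M : ℕ} (ω : Om1 M) : Om1 M := ![(∑ i : Fin M, X i ^ 2) * ω 1, 0]

/-- Embedding of `R` into `Ω` (coefficient of the basis element `1`). -/
def ofR1 {M : ℕ} (r : R1 M) : Om1 M := ![r, 0]

/-- The subring `ℂ[ψ₂,…,ψ_M]` of `R1 M`. -/
def coefRing1 (M : ℕ) (hM : 1 ≤ M) : Subalgebra ℂ (R1 M) :=
  MvPolynomial.supported ℂ {v : Fin M | v ≠ ⟨0, hM⟩}

/-- `finSuccEquiv` sends `rename Fin.succ b` to the constant polynomial `C b`. -/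
lemma finSuccEquiv_rename_succ {m : ℕ} (b : MvPolynomial (Fin m) ℂ) :
    MvPolynomial.finSuccEquiv ℂ m (rename Fin.succ b) = Polynomial.C b := by
  have h : ((MvPolynomial.finSuccEquiv ℂ m).toAlgHom.comp (rename Fin.succ) :
      MvPolynomial (Fin m) ℂ →ₐ[ℂ] Polynomial (MvPolynomial (Fin m) ℂ)) =
      Polynomial.CAlgHom := by
    apply MvPolynomial.algHom_ext
    intro i
    simp [Polynomial.CAlgHom, MvPolynomial.finSuccEquiv_X_succ]
  exact DFunLike.congr_fun h b

/-- A polynomial renamed along `Fin.succ` lies in the coefficient ring. -/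
lemma rename_succ_mem_coefRing {m : ℕ} (hM : 1 ≤ m + 1) (b : MvPolynomial (Fin m) ℂ) :
    rename Fin.succ b ∈ coefRing1 (m + 1) hM := by
  rw [coefRing1, MvPolynomial.mem_supported]
  intro v hv
  have hv' : v ∈ (b.vars.image Fin.succ : Finset (Fin (m + 1))) :=
    MvPolynomial.vars_rename Fin.succ b hv
  obtain ⟨j, _, rfl⟩ := Finset.mem_image.mp hv'
  have : (⟨0, hM⟩ : Fin (m + 1)) = 0 := rfl
  simp only [Set.mem_setOf_eq, this]
  exact Fin.succ_ne_zero j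

/-- If `0 ∉ p.vars` then `degreeOf 0 p = 0`. -/
lemma degreeOf_zero_of_not_mem_vars {m : ℕ} {p : MvPolynomial (Fin (m + 1)) ℂ}
    (h : (0 : Fin (m + 1)) ∉ p.vars) : p.degreeOf 0 = 0 := by
  refine Nat.le_zero.mp (MvPolynomial.degreeOf_le_iff.mpr fun mo hmo => ?_)
  by_contra hne
  exact h ((MvPolynomial.mem_vars 0).mpr
    ⟨mo, hmo, Finsupp.mem_support_iff.mpr (by omega)⟩)

/-- for `M ≥ 1`, `d∘d = 0`, and (i) `dω = 0` iff
`ω = dρ + a₀ + ψ₁a₁` for some `ρ` and `a₀, a₁ ∈ ℂ[ψ₂,…,ψ_M]`;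
(ii) if `a₀ + ψ₁a₁ = dρ` with `a₀, a₁ ∈ ℂ[ψ₂,…,ψ_M]` then `a₀ = a₁ = 0`. -/
theorem stmt19 (M : ℕ) (hM : 1 ≤ M) :
    (∀ ω : Om1 M, d1 (d1 ω) = 0)
    ∧
    (∀ ω : Om1 M, d1 ω = 0 ↔
      ∃ ρ : Om1 M, ∃ a0 ∈ coefRing1 M hM, ∃ a1 ∈ coefRing1 M hM,
        ω = d1 ρ + ofR1 (a0 + X ⟨0, hM⟩ * a1))
    ∧
    (∀ a0 ∈ coefRing1 M hM, ∀ a1 ∈ coefRing1 M hM,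
      (∃ ρ : Om1 M, ofR1 (a0 + X ⟨0, hM⟩ * a1) = d1 ρ) → a0 = 0 ∧ a1 = 0) := by
  obtain ⟨m, rfl⟩ : ∃ m, M = m + 1 := ⟨M - 1, by omega⟩
  set e := MvPolynomial.finSuccEquiv ℂ m with he
  set S : R1 (m + 1) := ∑ i : Fin (m + 1), X i ^ 2 with hSdef
  set c : MvPolynomial (Fin m) ℂ := ∑ j : Fin m, X j ^ 2 with hcdef
  set g : Polynomial (MvPolynomial (Fin m) ℂ) := Polynomial.X ^ 2 + Polynomial.C c
    with hgdef
  have hzero : (⟨0, hM⟩ : Fin (m + 1)) = 0 := rfl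
  have hg : g.Monic := Polynomial.monic_X_pow_add
    (lt_of_le_of_lt Polynomial.degree_C_le (by norm_num))
  have hgdeg : g.degree = 2 := Polynomial.degree_X_pow_add_C (by norm_num) c
  have heS : e S = g := by
    calc e S = e (X 0 ^ 2) + ∑ j : Fin m, e (X j.succ ^ 2) := by
          rw [hSdef, map_sum, Fin.sum_univ_succ]
      _ = Polynomial.X ^ 2 + Polynomial.C c := by
          rw [he, map_pow, MvPolynomial.finSuccEquiv_X_zero]
          congr 1
          rw [hcdef, map_sum]
          refine Finset.sum_congr rfl fun j _ => ?_
          rw [map_pow, MvPolynomial.finSuccEquiv_X_succ, ← Polynomial.C_pow]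
      _ = g := rfl
  have hS0 : S ≠ 0 := fun h => hg.ne_zero (by rw [← heS, h, map_zero])
  -- d1 ω = 0 ↔ ω 1 = 0
  have hd : ∀ ω : Om1 (m + 1), d1 ω = 0 ↔ ω 1 = 0 := by
    intro ω
    constructor
    · intro h
      have h0 := congrFun h 0
      simp only [d1, Matrix.cons_val_zero, Pi.zero_apply, ← hSdef] at h0
      rcases mul_eq_zero.mp h0 with h | h
      · exact absurd h hS0
      · exact h
    · intro h
      funext j
      fin_cases j <;> simp [d1, h]
  refine ⟨?_, ?_, ?_⟩
  · -- d ∘ d = 0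
    intro ω
    apply (hd _).mpr
    rfl
  · -- (i)
    intro ω
    constructor
    · intro h
      have hω1 : ω 1 = 0 := (hd ω).mp h
      set P : Polynomial (MvPolynomial (Fin m) ℂ) := e (ω 0) with hP
      set q := P /ₘ g with hq
      set r := P %ₘ g with hr
      have hdiv : r + g * q = P := Polynomial.modByMonic_add_div P g
      have hrdeg : r.degree < 2 := hgdeg ▸ Polynomial.degree_modByMonic_lt P hg
      have hrdeg1 : r.degree ≤ 1 := by
        by_cases hr0 : r = 0
        · simp [hr0]
        · rw [Polynomial.degree_eq_natDegree hr0] at hrdeg ⊢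
          exact_mod_cast Nat.lt_succ_iff.mp (by exact_mod_cast hrdeg)
      have hrr : r = Polynomial.C (r.coeff 1) * Polynomial.X + Polynomial.C (r.coeff 0) :=
        Polynomial.eq_X_add_C_of_degree_le_one hrdeg1
      refine ⟨![0, e.symm q], rename Fin.succ (r.coeff 0),
        rename_succ_mem_coefRing hM _, rename Fin.succ (r.coeff 1),
        rename_succ_mem_coefRing hM _, ?_⟩
      funext j
      fin_cases j
      · show ω 0 = _
        simp only [Pi.add_apply, d1, ofR1, Fin.mk_zero, Fin.mk_one, Matrix.cons_val_zero,
          Matrix.cons_val_one, Matrix.head_cons, ← hSdef]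
        apply e.injective
        rw [map_add, map_mul, map_add, map_mul, heS, AlgEquiv.apply_symm_apply,
          finSuccEquiv_rename_succ, finSuccEquiv_rename_succ]
        rw [show e (X (0 : Fin (m + 1))) = Polynomial.X from
          MvPolynomial.finSuccEquiv_X_zero]
        rw [← hP, ← hdiv, hrr]
        simp only [Polynomial.coeff_add, Polynomial.coeff_C_mul, Polynomial.coeff_X_one,
          Polynomial.coeff_X_zero, Polynomial.coeff_C, mul_one, mul_zero, add_zero, zero_add,
          if_pos rfl, if_neg (one_ne_zero), if_neg (zero_ne_one), if_true, ite_true]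
        ring
      · show ω 1 = _
        simp [d1, ofR1, hω1, Fin.mk_one]
    · rintro ⟨ρ, a0, _, a1, _, rfl⟩
      apply (hd _).mpr
      simp [d1, ofR1]
  · -- (ii)
    rintro a0 ha0 a1 ha1 ⟨ρ, hρ⟩
    have h0 : a0 + X (⟨0, hM⟩ : Fin (m + 1)) * a1 = S * ρ 1 := by
      have := congrFun hρ 0
      simpa [ofR1, d1, ← hSdef] using this
    -- a0, a1 have no variable 0, so their images under e are constants
    have key : ∀ a : R1 (m + 1), a ∈ coefRing1 (m + 1) hM →
        e a = Polynomial.C ((e a).coeff 0) := by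
      intro a ha
      have hv : (0 : Fin (m + 1)) ∉ a.vars := by
        rw [coefRing1, MvPolynomial.mem_supported] at ha
        intro hmem
        exact (ha hmem) hzero
      have : (e a).natDegree = 0 := by
        rw [he, MvPolynomial.natDegree_finSuccEquiv]
        exact degreeOf_zero_of_not_mem_vars hv
      exact Polynomial.eq_C_of_natDegree_eq_zero this
    set t0 := (e a0).coeff 0 with ht0
    set t1 := (e a1).coeff 0 with ht1
    have heq : Polynomial.C t0 + Polynomial.X * Polynomial.C t1 = g * e (ρ 1) := by
      have := congrArg e h0
      rwa [map_add, map_mul, map_mul, heS, key a0 ha0, key a1 ha1, hzero,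
        show e (X (0 : Fin (m + 1))) = Polynomial.X from
          MvPolynomial.finSuccEquiv_X_zero] at this
    have hlhs0 : Polynomial.C t0 + Polynomial.X * Polynomial.C t1 = 0 := by
      have hdegle : (Polynomial.C t0 + Polynomial.X * Polynomial.C t1).degree < g.degree := by
        rw [hgdeg]
        refine lt_of_le_of_lt (Polynomial.degree_add_le _ _) (max_lt ?_ ?_)
        · exact lt_of_le_of_lt Polynomial.degree_C_le (by norm_num)
        · refine lt_of_le_of_lt (Polynomial.degree_mul_le _ _) ?_
          calc Polynomial.degree (Polynomial.X :
                Polynomial (MvPolynomial (Fin m) ℂ)) + (Polynomial.C t1).degree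
              ≤ 1 + 0 := add_le_add Polynomial.degree_X_le Polynomial.degree_C_le
            _ < 2 := by norm_num
      have hmod1 : (Polynomial.C t0 + Polynomial.X * Polynomial.C t1) %ₘ g =
          Polynomial.C t0 + Polynomial.X * Polynomial.C t1 :=
        (Polynomial.modByMonic_eq_self_iff hg).mpr hdegle
      have hmod2 : (g * e (ρ 1)) %ₘ g = 0 :=
        (Polynomial.modByMonic_eq_zero_iff_dvd hg).mpr (dvd_mul_right _ _)
      rw [← hmod1, heq, hmod2]
    have ht0z : t0 = 0 := by
      have := congrArg (fun p => Polynomial.coeff p 0) hlhs0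
      simpa using this
    have ht1z : t1 = 0 := by
      have := congrArg (fun p => Polynomial.coeff p 1) hlhs0
      simpa [Polynomial.coeff_X_mul] using this
    constructor
    · apply e.injective
      rw [key a0 ha0, ← ht0, ht0z, map_zero, map_zero]
    · apply e.injective
      rw [key a1 ha1, ← ht1, ht1z, map_zero, map_zero]
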